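/- Let M1 < M2 be coprime integers with M1 ≥ 2, and let D_cp = {m M2 : 0 ≤ m ≤ 2M1−1} ∪ {m M1 : 1 ≤ m ≤ M2−1} be the co-prime array position set with M = 2M1 + M2 − 1. Then the beam pattern G(Δ; D_cp) = (1/M²)|Σ_{d∈D_cp} exp(iπ d Δ)|² is strictly decreasing in Δ on the interval (0, 1/(M1M2)]. In particular, the first local minimum point of G(·; D_cp) is at least 1/(M1M2). -/

import Mathlib

open Finset

/-- Co-prime array position set. -/
def Dcp (M1 M2 : ℕ) : Finset ℕ :=
  (Finset.range (2 * M1)).image (fun m => m * M2) ∪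
    (Finset.Icc 1 (M2 - 1)).image (fun m => m * M1)

/-- Beam pattern of the co-prime array (`M = 2M1 + M2 − 1`). -/
noncomputable def Gcp (M1 M2 : ℕ) (Δ : ℝ) : ℝ :=
  (1 / (2 * (M1 : ℝ) + (M2 : ℝ) - 1) ^ 2) *
    (‖∑ d ∈ Dcp M1 M2, Complex.exp (Complex.I * Real.pi * (d : ℝ) * Δ)‖) ^ 2


section aux
open Complex

lemma sin_sum_zero (n : ℕ) (θ : ℝ) :
    ∑ m ∈ range n, Real.sin ((2*(m:ℝ) - ((n:ℝ)-1))*θ) = 0 := by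
  have h := Finset.sum_range_reflect (fun m => Real.sin ((2*(m:ℝ) - ((n:ℝ)-1))*θ)) n
  have h2 : ∀ m ∈ range n, Real.sin ((2*((n - 1 - m : ℕ):ℝ) - ((n:ℝ)-1))*θ)
      = - Real.sin ((2*(m:ℝ) - ((n:ℝ)-1))*θ) := by
    intro m hm
    rw [mem_range] at hm
    have h1m : m ≤ n - 1 := Nat.le_sub_one_of_lt hm
    have : ((n - 1 - m : ℕ):ℝ) = (n:ℝ) - 1 - m := by
      have hn : 1 ≤ n := Nat.one_le_of_lt (Nat.lt_of_le_of_lt (Nat.zero_le m) hm)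
      push_cast [Nat.cast_sub h1m, Nat.cast_sub hn]
      ring
    rw [this, ← Real.sin_neg]
    ring_nf
  rw [Finset.sum_congr rfl h2, Finset.sum_neg_distrib] at h
  linarith

lemma cos_tele (n : ℕ) (θ : ℝ) :
    (∑ m ∈ range n, Real.cos ((2*(m:ℝ) - ((n:ℝ)-1))*θ)) * Real.sin θ
      = Real.sin ((n:ℝ)*θ) := by
  have key : ∀ m : ℕ, Real.cos ((2*(m:ℝ) - ((n:ℝ)-1))*θ) * Real.sin θ
      = Real.sin ((2*((m+1:ℕ):ℝ) - (n:ℝ))*θ)/2 - Real.sin ((2*(m:ℝ) - (n:ℝ))*θ)/2 := by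
    intro m
    have e1 : (2*((m+1:ℕ):ℝ) - (n:ℝ))*θ = (2*(m:ℝ) - ((n:ℝ)-1))*θ + θ := by push_cast; ring
    have e2 : (2*(m:ℝ) - (n:ℝ))*θ = (2*(m:ℝ) - ((n:ℝ)-1))*θ - θ := by ring
    rw [e1, e2, Real.sin_add, Real.sin_sub]
    ring
  rw [Finset.sum_mul]
  calc ∑ m ∈ range n, Real.cos ((2*(m:ℝ) - ((n:ℝ)-1))*θ) * Real.sin θ
      = ∑ m ∈ range n, (Real.sin ((2*((m+1:ℕ):ℝ) - (n:ℝ))*θ)/2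
          - Real.sin ((2*(m:ℝ) - (n:ℝ))*θ)/2) := by
        exact Finset.sum_congr rfl (fun m _ => key m)
    _ = Real.sin ((2*((n:ℕ):ℝ) - (n:ℝ))*θ)/2 - Real.sin ((2*((0:ℕ):ℝ) - (n:ℝ))*θ)/2 :=
        Finset.sum_range_sub (fun m => Real.sin ((2*((m:ℕ):ℝ) - (n:ℝ))*θ)/2) n
    _ = Real.sin ((n:ℝ)*θ) := by
        have : (2*((0:ℕ):ℝ) - (n:ℝ))*θ = -((n:ℝ)*θ) := by push_cast; ring
        rw [this, Real.sin_neg]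
        have : (2*((n:ℕ):ℝ) - (n:ℝ))*θ = (n:ℝ)*θ := by ring
        rw [this]; ring

lemma phase_sum (n : ℕ) (θ φ : ℝ) :
    ∑ m ∈ range n, Complex.exp (Complex.I * (φ + 2*(m:ℝ)*θ))
      = Complex.exp (Complex.I * (φ + ((n:ℝ)-1)*θ)) *
        ((∑ m ∈ range n, Real.cos ((2*(m:ℝ) - ((n:ℝ)-1))*θ) : ℝ) : ℂ) := by
  have step : ∀ m ∈ range n, Complex.exp (Complex.I * (φ + 2*(m:ℝ)*θ))
      = Complex.exp (Complex.I * (φ + ((n:ℝ)-1)*θ)) *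
        Complex.exp (((2*(m:ℝ) - ((n:ℝ)-1))*θ : ℝ) * Complex.I) := by
    intro m _
    rw [← Complex.exp_add]
    congr 1
    push_cast
    ring
  rw [Finset.sum_congr rfl step, ← Finset.mul_sum]
  congr 1
  have : ∀ m ∈ range n, Complex.exp (((2*(m:ℝ) - ((n:ℝ)-1))*θ : ℝ) * Complex.I)
      = ((Real.cos ((2*(m:ℝ) - ((n:ℝ)-1))*θ) : ℝ) : ℂ)
        + ((Real.sin ((2*(m:ℝ) - ((n:ℝ)-1))*θ) : ℝ) : ℂ) * Complex.I := by
    intro m _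
    rw [Complex.exp_mul_I]
    push_cast
    rfl
  rw [Finset.sum_congr rfl this, Finset.sum_add_distrib, ← Finset.sum_mul,
      ← Complex.ofReal_sum, ← Complex.ofReal_sum, sin_sum_zero]
  simp

lemma norm_combo (α β a b : ℝ) :
    (‖Complex.exp (Complex.I * α) * (a:ℂ) + Complex.exp (Complex.I * β) * (b:ℂ)‖)^2
      = a^2 + b^2 + 2*(a*b*Real.cos (α - β)) := by
  have ea : Complex.exp (Complex.I * α) = (Real.cos α : ℂ) + (Real.sin α : ℂ) * Complex.I := by
    rw [mul_comm, Complex.exp_mul_I]; push_cast; rfl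
  have eb : Complex.exp (Complex.I * β) = (Real.cos β : ℂ) + (Real.sin β : ℂ) * Complex.I := by
    rw [mul_comm, Complex.exp_mul_I]; push_cast; rfl
  rw [ea, eb]
  have : ((Real.cos α : ℂ) + (Real.sin α : ℂ) * Complex.I) * a
      + ((Real.cos β : ℂ) + (Real.sin β : ℂ) * Complex.I) * b
      = ((Real.cos α * a + Real.cos β * b : ℝ) : ℂ)
        + ((Real.sin α * a + Real.sin β * b : ℝ) : ℂ) * Complex.I := by
    push_cast; ring
  rw [this, Complex.sq_norm, Complex.normSq_add_mul_I, Real.cos_sub]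
  have h1 := Real.sin_sq_add_cos_sq α
  have h2 := Real.sin_sq_add_cos_sq β
  nlinarith [h1, h2]

noncomputable def aF (M1 M2 : ℕ) (Δ : ℝ) : ℝ :=
  ∑ m ∈ Finset.range (2*M1), Real.cos ((2*(m:ℝ) - (2*(M1:ℝ) - 1)) * ((M2:ℝ) * Real.pi * Δ / 2))

noncomputable def bF (M1 M2 : ℕ) (Δ : ℝ) : ℝ :=
  ∑ m ∈ Finset.range (M2-1), Real.cos ((2*(m:ℝ) - ((M2:ℝ) - 2)) * ((M1:ℝ) * Real.pi * Δ / 2))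

lemma cos_lt_cos_abs {k θ1 θ2 : ℝ} (hk1 : 1 ≤ |k|) (h1 : 0 < θ1) (hlt : θ1 < θ2)
    (hbound : |k| * θ2 ≤ Real.pi) : Real.cos (k*θ2) < Real.cos (k*θ1) := by
  have h2 : 0 < θ2 := h1.trans hlt
  have hkpos : 0 < |k| := lt_of_lt_of_le one_pos hk1
  have e1 : Real.cos (k*θ1) = Real.cos (|k| * θ1) := by
    rw [← Real.cos_abs (k*θ1), abs_mul, abs_of_pos h1]
  have e2 : Real.cos (k*θ2) = Real.cos (|k| * θ2) := by
    rw [← Real.cos_abs (k*θ2), abs_mul, abs_of_pos h2]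
  rw [e1, e2]
  have m1 : |k| * θ1 ∈ Set.Icc 0 Real.pi :=
    ⟨by positivity, le_trans (by nlinarith) hbound⟩
  have m2 : |k| * θ2 ∈ Set.Icc 0 Real.pi := ⟨by positivity, hbound⟩
  exact Real.strictAntiOn_cos m1 m2 (by nlinarith)

section main
variable {M1 M2 : ℕ} (hM1 : 2 ≤ M1) (h12 : M1 < M2)

include hM1 h12 in
lemma aF_nonneg (Δ : ℝ) (hΔ : 0 < Δ) (hΔ' : Δ ≤ 1 / ((M1:ℝ)*(M2:ℝ))) :
    0 ≤ aF M1 M2 Δ := by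
  have h2 : (2:ℝ) ≤ (M1:ℝ) := by exact_mod_cast hM1
  have h3 : (M1:ℝ) < (M2:ℝ) := by exact_mod_cast h12
  have hpi := Real.pi_pos
  have hM1R : (0:ℝ) < (M1:ℝ) := by linarith
  have hM2R : (0:ℝ) < (M2:ℝ) := by linarith
  set θ : ℝ := (M2:ℝ) * Real.pi * Δ / 2 with hθ
  have hθpos : 0 < θ := by
    have := mul_pos (mul_pos hM2R hpi) hΔ
    rw [hθ]; linarith
  have hθle : θ ≤ Real.pi / (2*(M1:ℝ)) := by
    rw [hθ, div_le_div_iff₀ (by norm_num) (by linarith)]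
    rw [le_div_iff₀ (mul_pos hM1R hM2R)] at hΔ'
    nlinarith
  have htele := cos_tele (2*M1) θ
  have hcast : ((2*M1:ℕ):ℝ) = 2*(M1:ℝ) := by push_cast; ring
  rw [hcast] at htele
  have hsinθ : 0 < Real.sin θ := by
    apply Real.sin_pos_of_pos_of_lt_pi hθpos
    have : Real.pi / (2*(M1:ℝ)) < Real.pi := by
      rw [div_lt_iff₀ (by linarith)]
      nlinarith
    linarith
  have hsin2 : 0 ≤ Real.sin (2*(M1:ℝ)*θ) := by
    apply Real.sin_nonneg_of_nonneg_of_le_pi (by nlinarith)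
    rw [div_le_div_iff₀ (by linarith) (by linarith)] at hθle
    nlinarith
  have key : aF M1 M2 Δ * Real.sin θ = Real.sin (2*(M1:ℝ)*θ) := htele
  by_contra hneg
  push_neg at hneg
  nlinarith

include hM1 h12 in
lemma aF_pos (Δ : ℝ) (hΔ : 0 < Δ) (hΔ' : Δ < 1 / ((M1:ℝ)*(M2:ℝ))) :
    0 < aF M1 M2 Δ := by
  have h2 : (2:ℝ) ≤ (M1:ℝ) := by exact_mod_cast hM1
  have h3 : (M1:ℝ) < (M2:ℝ) := by exact_mod_cast h12
  have hpi := Real.pi_pos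
  have hM1R : (0:ℝ) < (M1:ℝ) := by linarith
  have hM2R : (0:ℝ) < (M2:ℝ) := by linarith
  set θ : ℝ := (M2:ℝ) * Real.pi * Δ / 2 with hθ
  have hθpos : 0 < θ := by
    have := mul_pos (mul_pos hM2R hpi) hΔ
    rw [hθ]; linarith
  have hθlt : θ < Real.pi / (2*(M1:ℝ)) := by
    rw [hθ, div_lt_div_iff₀ (by norm_num) (by linarith)]
    rw [lt_div_iff₀ (mul_pos hM1R hM2R)] at hΔ'
    nlinarith
  have htele := cos_tele (2*M1) θ
  have hcast : ((2*M1:ℕ):ℝ) = 2*(M1:ℝ) := by push_cast; ring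
  rw [hcast] at htele
  have hsinθ : 0 < Real.sin θ := by
    apply Real.sin_pos_of_pos_of_lt_pi hθpos
    have : Real.pi / (2*(M1:ℝ)) < Real.pi := by
      rw [div_lt_iff₀ (by linarith)]
      nlinarith
    linarith
  have hsin2 : 0 < Real.sin (2*(M1:ℝ)*θ) := by
    apply Real.sin_pos_of_pos_of_lt_pi (by nlinarith)
    rw [div_lt_div_iff₀ (by linarith) (by linarith)] at hθlt
    nlinarith
  have key : aF M1 M2 Δ * Real.sin θ = Real.sin (2*(M1:ℝ)*θ) := htele
  nlinarith

include hM1 h12 in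
lemma aF_anti (Δ1 Δ2 : ℝ) (h1 : 0 < Δ1) (hlt : Δ1 < Δ2)
    (h2' : Δ2 ≤ 1 / ((M1:ℝ)*(M2:ℝ))) : aF M1 M2 Δ2 < aF M1 M2 Δ1 := by
  have h2 : (2:ℝ) ≤ (M1:ℝ) := by exact_mod_cast hM1
  have h3 : (M1:ℝ) < (M2:ℝ) := by exact_mod_cast h12
  have hpi := Real.pi_pos
  have hM1R : (0:ℝ) < (M1:ℝ) := by linarith
  have hM2R : (0:ℝ) < (M2:ℝ) := by linarith
  rw [aF, aF]
  apply Finset.sum_lt_sum_of_nonempty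
  · exact Finset.nonempty_range_iff.2 (by omega)
  intro m hm
  rw [Finset.mem_range] at hm
  have hθ1 : 0 < (M2:ℝ) * Real.pi * Δ1 / 2 := by
    have := mul_pos (mul_pos hM2R hpi) h1
    linarith
  have hθlt : (M2:ℝ) * Real.pi * Δ1 / 2 < (M2:ℝ) * Real.pi * Δ2 / 2 := by
    nlinarith [mul_pos (mul_pos hM2R hpi) (sub_pos.2 hlt)]
  have hθ2le : (M2:ℝ) * Real.pi * Δ2 / 2 ≤ Real.pi / (2*(M1:ℝ)) := by
    rw [div_le_div_iff₀ (by norm_num) (by linarith)]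
    rw [le_div_iff₀ (mul_pos hM1R hM2R)] at h2'
    nlinarith
  set k : ℝ := 2*(m:ℝ) - (2*(M1:ℝ) - 1) with hk
  have hk1 : 1 ≤ |k| := by
    rcases lt_or_ge m M1 with h | h
    · have hcast : (m:ℝ) + 1 ≤ (M1:ℝ) := by exact_mod_cast h
      rw [le_abs]
      right
      rw [hk]
      linarith
    · have hcast : (M1:ℝ) ≤ (m:ℝ) := by exact_mod_cast h
      rw [le_abs]
      left
      rw [hk]
      linarith
  have hkle : |k| ≤ 2*(M1:ℝ) - 1 := by
    have hcast : (m:ℝ) + 1 ≤ 2*(M1:ℝ) := by exact_mod_cast hm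
    rw [abs_le]
    refine ⟨?_, ?_⟩ <;> rw [hk] <;> push_cast <;> [nlinarith; nlinarith]
  have hbound : |k| * ((M2:ℝ) * Real.pi * Δ2 / 2) ≤ Real.pi := by
    have hθ2pos : 0 < (M2:ℝ) * Real.pi * Δ2 / 2 := by linarith
    have t1 : |k| * ((M2:ℝ) * Real.pi * Δ2 / 2) ≤ (2*(M1:ℝ) - 1) * ((M2:ℝ) * Real.pi * Δ2 / 2) :=
      mul_le_mul_of_nonneg_right hkle hθ2pos.le
    have t2 : (2*(M1:ℝ) - 1) * ((M2:ℝ) * Real.pi * Δ2 / 2) ≤ (2*(M1:ℝ) - 1) * (Real.pi / (2*(M1:ℝ))) :=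
      mul_le_mul_of_nonneg_left hθ2le (by linarith)
    have t3 : (2*(M1:ℝ) - 1) * (Real.pi / (2*(M1:ℝ))) ≤ Real.pi := by
      rw [mul_div_assoc', div_le_iff₀ (by linarith)]
      nlinarith
    linarith
  exact cos_lt_cos_abs hk1 hθ1 hθlt hbound

include hM1 h12 in
lemma bF_pos (Δ : ℝ) (hΔ : 0 < Δ) (hΔ' : Δ ≤ 1 / ((M1:ℝ)*(M2:ℝ))) :
    0 < bF M1 M2 Δ := by
  have h2 : (2:ℝ) ≤ (M1:ℝ) := by exact_mod_cast hM1
  have h3 : (M1:ℝ) < (M2:ℝ) := by exact_mod_cast h12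
  have hpi := Real.pi_pos
  have hM1R : (0:ℝ) < (M1:ℝ) := by linarith
  have hM2R : (0:ℝ) < (M2:ℝ) := by linarith
  set θ : ℝ := (M1:ℝ) * Real.pi * Δ / 2 with hθ
  have hθpos : 0 < θ := by
    have := mul_pos (mul_pos hM1R hpi) hΔ
    rw [hθ]; linarith
  have hθle : θ ≤ Real.pi / (2*(M2:ℝ)) := by
    rw [hθ, div_le_div_iff₀ (by norm_num) (by linarith)]
    rw [le_div_iff₀ (mul_pos hM1R hM2R)] at hΔ'
    nlinarith
  rw [bF]
  apply Finset.sum_pos ?_ (Finset.nonempty_range_iff.2 (by omega))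
  intro i hi
  rw [Finset.mem_range] at hi
  have hcast : (i:ℝ) + 1 ≤ (M2:ℝ) - 1 := by
    have h' : i + 1 ≤ M2 - 1 := hi
    have : (i:ℝ) + 1 ≤ ((M2 - 1 : ℕ):ℝ) := by exact_mod_cast h'
    rw [Nat.cast_sub (by omega)] at this
    push_cast at this
    linarith
  set k : ℝ := 2*(i:ℝ) - ((M2:ℝ) - 2) with hk
  have hkabs : |k| * θ ≤ ((M2:ℝ) - 2) * θ := by
    apply mul_le_mul_of_nonneg_right ?_ hθpos.le
    rw [abs_le]
    refine ⟨?_, ?_⟩ <;> rw [hk] <;> [linarith; linarith]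
  have hlt2 : ((M2:ℝ) - 2) * θ < Real.pi / 2 := by
    have t2 : ((M2:ℝ) - 2) * θ ≤ ((M2:ℝ) - 2) * (Real.pi / (2*(M2:ℝ))) :=
      mul_le_mul_of_nonneg_left hθle (by linarith)
    have t3 : ((M2:ℝ) - 2) * (Real.pi / (2*(M2:ℝ))) < Real.pi / 2 := by
      rw [mul_div_assoc', div_lt_div_iff₀ (by linarith) (by norm_num)]
      nlinarith
    linarith
  apply Real.cos_pos_of_mem_Ioo
  have habs : |k * θ| < Real.pi / 2 := by
    rw [abs_mul, abs_of_pos hθpos]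
    linarith
  rw [Set.mem_Ioo, ← hθ]
  rw [abs_lt] at habs
  exact habs

include hM1 h12 in
lemma bF_anti (Δ1 Δ2 : ℝ) (h1 : 0 < Δ1) (hlt : Δ1 < Δ2)
    (h2' : Δ2 ≤ 1 / ((M1:ℝ)*(M2:ℝ))) : bF M1 M2 Δ2 < bF M1 M2 Δ1 := by
  have h2 : (2:ℝ) ≤ (M1:ℝ) := by exact_mod_cast hM1
  have h3 : (M1:ℝ) < (M2:ℝ) := by exact_mod_cast h12
  have h3' : (3:ℝ) ≤ (M2:ℝ) := by
    have : 3 ≤ M2 := by omega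
    exact_mod_cast this
  have hpi := Real.pi_pos
  have hM1R : (0:ℝ) < (M1:ℝ) := by linarith
  have hM2R : (0:ℝ) < (M2:ℝ) := by linarith
  have hθ1 : 0 < (M1:ℝ) * Real.pi * Δ1 / 2 := by
    have := mul_pos (mul_pos hM1R hpi) h1
    linarith
  have hθlt : (M1:ℝ) * Real.pi * Δ1 / 2 < (M1:ℝ) * Real.pi * Δ2 / 2 := by
    nlinarith [mul_pos (mul_pos hM1R hpi) (sub_pos.2 hlt)]
  have hθ2le : (M1:ℝ) * Real.pi * Δ2 / 2 ≤ Real.pi / (2*(M2:ℝ)) := by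
    rw [div_le_div_iff₀ (by norm_num) (by linarith)]
    rw [le_div_iff₀ (mul_pos hM1R hM2R)] at h2'
    nlinarith
  have hbound : ∀ k : ℝ, |k| ≤ (M2:ℝ) - 2 → |k| * ((M1:ℝ) * Real.pi * Δ2 / 2) ≤ Real.pi := by
    intro k hkle
    have hθ2pos : 0 < (M1:ℝ) * Real.pi * Δ2 / 2 := by linarith
    have t1 := mul_le_mul_of_nonneg_right hkle hθ2pos.le
    have t2 := mul_le_mul_of_nonneg_left hθ2le (by linarith : (0:ℝ) ≤ (M2:ℝ) - 2)
    have t3 : ((M2:ℝ) - 2) * (Real.pi / (2*(M2:ℝ))) ≤ Real.pi := by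
      rw [mul_div_assoc', div_le_iff₀ (by linarith)]
      nlinarith
    linarith
  rw [bF, bF]
  apply Finset.sum_lt_sum
  · intro i hi
    rw [Finset.mem_range] at hi
    have hcast : (i:ℝ) + 1 ≤ (M2:ℝ) - 1 := by
      have h' : i + 1 ≤ M2 - 1 := hi
      have : (i:ℝ) + 1 ≤ ((M2 - 1 : ℕ):ℝ) := by exact_mod_cast h'
      rw [Nat.cast_sub (by omega)] at this
      push_cast at this
      linarith
    set k : ℝ := 2*(i:ℝ) - ((M2:ℝ) - 2) with hk
    have hkle : |k| ≤ (M2:ℝ) - 2 := by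
      rw [abs_le]
      refine ⟨?_, ?_⟩ <;> rw [hk] <;> [linarith; linarith]
    rcases eq_or_ne k 0 with hk0 | hk0
    · rw [hk0]
      simp
    · apply le_of_lt
      have hki : k = ((2*(i:ℤ) - ((M2:ℤ) - 2) : ℤ) : ℝ) := by rw [hk]; push_cast; ring
      have hz0 : (2*(i:ℤ) - ((M2:ℤ) - 2) : ℤ) ≠ 0 := by
        intro h0
        apply hk0
        rw [hki, h0]
        norm_num
      have hz1 : (1:ℤ) ≤ |2*(i:ℤ) - ((M2:ℤ) - 2)| := Int.one_le_abs hz0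
      have hk1 : 1 ≤ |k| := by
        rw [hki, ← Int.cast_abs]
        exact_mod_cast hz1
      exact cos_lt_cos_abs hk1 hθ1 hθlt (hbound k hkle)
  · refine ⟨0, Finset.mem_range.2 (by omega), ?_⟩
    set k : ℝ := 2*((0:ℕ):ℝ) - ((M2:ℝ) - 2) with hk
    have hk1 : 1 ≤ |k| := by
      rw [le_abs]
      right
      rw [hk]
      push_cast
      linarith
    have hkle : |k| ≤ (M2:ℝ) - 2 := by
      rw [abs_le]
      refine ⟨?_, ?_⟩ <;> rw [hk] <;> push_cast <;> [linarith; linarith]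
    exact cos_lt_cos_abs hk1 hθ1 hθlt (hbound k hkle)

include hM1 h12 in
lemma cG_pos (Δ : ℝ) (hΔ : 0 < Δ) (hΔ' : Δ ≤ 1 / ((M1:ℝ)*(M2:ℝ))) :
    0 < Real.cos (((M1:ℝ) - 1) * ((M2:ℝ) * Real.pi * Δ / 2)) := by
  have h2 : (2:ℝ) ≤ (M1:ℝ) := by exact_mod_cast hM1
  have h3 : (M1:ℝ) < (M2:ℝ) := by exact_mod_cast h12
  have hpi := Real.pi_pos
  have hM1R : (0:ℝ) < (M1:ℝ) := by linarith
  have hM2R : (0:ℝ) < (M2:ℝ) := by linarith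
  have hθpos : 0 < (M2:ℝ) * Real.pi * Δ / 2 := by
    have := mul_pos (mul_pos hM2R hpi) hΔ
    linarith
  have hθle : (M2:ℝ) * Real.pi * Δ / 2 ≤ Real.pi / (2*(M1:ℝ)) := by
    rw [div_le_div_iff₀ (by norm_num) (by linarith)]
    rw [le_div_iff₀ (mul_pos hM1R hM2R)] at hΔ'
    nlinarith
  apply Real.cos_pos_of_mem_Ioo
  rw [Set.mem_Ioo]
  constructor
  · have : 0 < ((M1:ℝ) - 1) * ((M2:ℝ) * Real.pi * Δ / 2) := by
      apply mul_pos (by linarith) hθpos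
    linarith
  · have t2 : ((M1:ℝ) - 1) * ((M2:ℝ) * Real.pi * Δ / 2) ≤ ((M1:ℝ) - 1) * (Real.pi / (2*(M1:ℝ))) :=
      mul_le_mul_of_nonneg_left hθle (by linarith)
    have t3 : ((M1:ℝ) - 1) * (Real.pi / (2*(M1:ℝ))) < Real.pi / 2 := by
      rw [mul_div_assoc', div_lt_div_iff₀ (by linarith) (by norm_num)]
      nlinarith
    linarith

include hM1 h12 in
lemma cG_anti (Δ1 Δ2 : ℝ) (h1 : 0 < Δ1) (hlt : Δ1 < Δ2)
    (h2' : Δ2 ≤ 1 / ((M1:ℝ)*(M2:ℝ))) :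
    Real.cos (((M1:ℝ) - 1) * ((M2:ℝ) * Real.pi * Δ2 / 2))
      < Real.cos (((M1:ℝ) - 1) * ((M2:ℝ) * Real.pi * Δ1 / 2)) := by
  have h2 : (2:ℝ) ≤ (M1:ℝ) := by exact_mod_cast hM1
  have h3 : (M1:ℝ) < (M2:ℝ) := by exact_mod_cast h12
  have hpi := Real.pi_pos
  have hM1R : (0:ℝ) < (M1:ℝ) := by linarith
  have hM2R : (0:ℝ) < (M2:ℝ) := by linarith
  have hθ1 : 0 < (M2:ℝ) * Real.pi * Δ1 / 2 := by
    have := mul_pos (mul_pos hM2R hpi) h1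
    linarith
  have hθlt : (M2:ℝ) * Real.pi * Δ1 / 2 < (M2:ℝ) * Real.pi * Δ2 / 2 := by
    nlinarith [mul_pos (mul_pos hM2R hpi) (sub_pos.2 hlt)]
  have hθ2le : (M2:ℝ) * Real.pi * Δ2 / 2 ≤ Real.pi / (2*(M1:ℝ)) := by
    rw [div_le_div_iff₀ (by norm_num) (by linarith)]
    rw [le_div_iff₀ (mul_pos hM1R hM2R)] at h2'
    nlinarith
  have hk1 : 1 ≤ |(M1:ℝ) - 1| := by
    rw [le_abs]
    left
    linarith
  have hkle : |(M1:ℝ) - 1| ≤ (M1:ℝ) - 1 := le_of_eq (abs_of_pos (by linarith))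
  have hbound : |(M1:ℝ) - 1| * ((M2:ℝ) * Real.pi * Δ2 / 2) ≤ Real.pi := by
    have t1 := mul_le_mul_of_nonneg_right hkle (by linarith : (0:ℝ) ≤ (M2:ℝ) * Real.pi * Δ2 / 2)
    have t2 := mul_le_mul_of_nonneg_left hθ2le (by linarith : (0:ℝ) ≤ (M1:ℝ) - 1)
    have t3 : ((M1:ℝ) - 1) * (Real.pi / (2*(M1:ℝ))) ≤ Real.pi := by
      rw [mul_div_assoc', div_le_iff₀ (by linarith)]
      nlinarith
    linarith
  exact cos_lt_cos_abs hk1 hθ1 hθlt hbound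

end main

lemma Gval (M1 M2 : ℕ) (hM1 : 2 ≤ M1) (h12 : M1 < M2) (hc : Nat.Coprime M1 M2) (Δ : ℝ) :
    Gcp M1 M2 Δ = (1 / (2 * (M1 : ℝ) + (M2 : ℝ) - 1) ^ 2) *
      (aF M1 M2 Δ ^ 2 + bF M1 M2 Δ ^ 2 +
        2*(aF M1 M2 Δ * bF M1 M2 Δ *
          Real.cos (((M1:ℝ) - 1) * ((M2:ℝ) * Real.pi * Δ / 2)))) := by
  have hM2pos : 0 < M2 := lt_of_le_of_lt (Nat.zero_le _) h12
  have hM1pos : 0 < M1 := lt_of_lt_of_le (by norm_num) hM1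
  set θa : ℝ := (M2:ℝ) * Real.pi * Δ / 2 with hθa
  set θb : ℝ := (M1:ℝ) * Real.pi * Δ / 2 with hθb
  -- disjointness
  have hdisj : Disjoint ((Finset.range (2 * M1)).image (fun m => m * M2))
      ((Finset.Icc 1 (M2 - 1)).image (fun m => m * M1)) := by
    rw [Finset.disjoint_left]
    rintro x hx hy
    obtain ⟨m, _, rfl⟩ := Finset.mem_image.1 hx
    obtain ⟨n, hn, he⟩ := Finset.mem_image.1 hy
    rw [Finset.mem_Icc] at hn
    have hdvd : M2 ∣ n := (hc.symm).dvd_of_dvd_mul_right ⟨m, by rw [he, Nat.mul_comm]⟩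
    have := Nat.le_of_dvd (by omega) hdvd
    omega
  have hsplit : ∑ d ∈ Dcp M1 M2, Complex.exp (Complex.I * Real.pi * (d : ℝ) * Δ)
      = (∑ m ∈ Finset.range (2*M1), Complex.exp (Complex.I * Real.pi * ((m*M2 : ℕ) : ℝ) * Δ))
        + ∑ n ∈ Finset.Icc 1 (M2-1), Complex.exp (Complex.I * Real.pi * ((n*M1 : ℕ) : ℝ) * Δ) := by
    rw [Dcp, Finset.sum_union hdisj, Finset.sum_image (fun x _ y _ h => by
          exact Nat.eq_of_mul_eq_mul_right hM2pos h),
        Finset.sum_image (fun x _ y _ h => by exact Nat.eq_of_mul_eq_mul_right hM1pos h)]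
  have hIcc : ∑ n ∈ Finset.Icc 1 (M2-1), Complex.exp (Complex.I * Real.pi * ((n*M1 : ℕ) : ℝ) * Δ)
      = ∑ i ∈ Finset.range (M2-1), Complex.exp (Complex.I * Real.pi * (((1+i)*M1 : ℕ) : ℝ) * Δ) := by
    have h1 : Finset.Icc 1 (M2-1) = Finset.Ico 1 M2 := by
      rw [← Finset.Ico_add_one_right_eq_Icc]
      congr 1
      omega
    rw [h1, Finset.sum_Ico_eq_sum_range]
  have ha : ∑ m ∈ Finset.range (2*M1), Complex.exp (Complex.I * Real.pi * ((m*M2 : ℕ) : ℝ) * Δ)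
      = Complex.exp (Complex.I * ((0:ℝ) + (((2*M1:ℕ):ℝ)-1)*θa)) * ((aF M1 M2 Δ : ℝ) : ℂ) := by
    have hcast : ((2*M1:ℕ):ℝ) = 2*(M1:ℝ) := by push_cast; ring
    calc ∑ m ∈ Finset.range (2*M1), Complex.exp (Complex.I * Real.pi * ((m*M2 : ℕ) : ℝ) * Δ)
        = ∑ m ∈ Finset.range (2*M1), Complex.exp (Complex.I * ((0:ℝ) + 2*(m:ℝ)*θa)) := by
          refine Finset.sum_congr rfl (fun m _ => ?_)
          congr 1
          push_cast [hθa]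
          ring
      _ = Complex.exp (Complex.I * ((0:ℝ) + (((2*M1:ℕ):ℝ)-1)*θa)) *
            ((∑ m ∈ range (2*M1), Real.cos ((2*(m:ℝ) - (((2*M1:ℕ):ℝ)-1))*θa) : ℝ) : ℂ) :=
          phase_sum (2*M1) θa 0
      _ = _ := by rw [aF, hcast]
  have hb : ∑ i ∈ Finset.range (M2-1), Complex.exp (Complex.I * Real.pi * (((1+i)*M1 : ℕ) : ℝ) * Δ)
      = Complex.exp (Complex.I * ((2*θb:ℝ) + (((M2-1:ℕ):ℝ)-1)*θb)) * ((bF M1 M2 Δ : ℝ) : ℂ) := by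
    have hcast : ((M2-1:ℕ):ℝ) = (M2:ℝ) - 1 := by
      push_cast [Nat.cast_sub (by omega : 1 ≤ M2)]
      ring
    calc ∑ i ∈ Finset.range (M2-1), Complex.exp (Complex.I * Real.pi * (((1+i)*M1 : ℕ) : ℝ) * Δ)
        = ∑ i ∈ Finset.range (M2-1), Complex.exp (Complex.I * ((2*θb:ℝ) + 2*(i:ℝ)*θb)) := by
          refine Finset.sum_congr rfl (fun i _ => ?_)
          congr 1
          push_cast [hθb]
          ring
      _ = Complex.exp (Complex.I * ((2*θb:ℝ) + (((M2-1:ℕ):ℝ)-1)*θb)) *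
            ((∑ i ∈ range (M2-1), Real.cos ((2*(i:ℝ) - (((M2-1:ℕ):ℝ)-1))*θb) : ℝ) : ℂ) :=
          phase_sum (M2-1) θb (2*θb)
      _ = _ := by
          rw [bF, hcast]
          norm_num
          refine Finset.sum_congr rfl (fun x _ => ?_)
          congr 1
          rw [hθb]
          push_cast
          ring
  have hang : ((0:ℝ) + (((2*M1:ℕ):ℝ)-1)*θa) - ((2*θb:ℝ) + (((M2-1:ℕ):ℝ)-1)*θb)
      = ((M1:ℝ)-1)*θa := by
    rw [hθa, hθb]
    push_cast [Nat.cast_sub (by omega : 1 ≤ M2)]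
    ring
  have e1 : Complex.exp (Complex.I * ((0:ℝ) + (((2*M1:ℕ):ℝ)-1)*θa))
      = Complex.exp (Complex.I * ((((0:ℝ) + (((2*M1:ℕ):ℝ)-1)*θa) : ℝ) : ℂ)) := by
    push_cast
    ring_nf
  have e2 : Complex.exp (Complex.I * ((2*θb:ℝ) + (((M2-1:ℕ):ℝ)-1)*θb))
      = Complex.exp (Complex.I * ((((2*θb:ℝ) + (((M2-1:ℕ):ℝ)-1)*θb) : ℝ) : ℂ)) := by
    push_cast
    ring_nf
  rw [Gcp, hsplit, hIcc, ha, hb, e1, e2, norm_combo, hang, hθa]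

end aux

/-- the co-prime array beam pattern is strictly decreasing on
`(0, 1/(M1 M2)]`; in particular every positive local minimum point is at least
`1/(M1 M2)`. -/
theorem coprime_beam_pattern_strictAnti (M1 M2 : ℕ) (hM1 : 2 ≤ M1) (h12 : M1 < M2)
    (hc : Nat.Coprime M1 M2) :
    StrictAntiOn (Gcp M1 M2) (Set.Ioc 0 (1 / ((M1 : ℝ) * (M2 : ℝ)))) ∧
      ∀ Δ : ℝ, 0 < Δ → IsLocalMin (Gcp M1 M2) Δ →
        1 / ((M1 : ℝ) * (M2 : ℝ)) ≤ Δ := by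
  have h2 : (2:ℝ) ≤ (M1:ℝ) := by exact_mod_cast hM1
  have h3 : (M1:ℝ) < (M2:ℝ) := by exact_mod_cast h12
  have hanti : StrictAntiOn (Gcp M1 M2) (Set.Ioc 0 (1 / ((M1 : ℝ) * (M2 : ℝ)))) := by
    intro Δ1 hΔ1 Δ2 hΔ2 hlt
    obtain ⟨h1pos, h1le⟩ := hΔ1
    obtain ⟨h2pos, h2le⟩ := hΔ2
    rw [Gval M1 M2 hM1 h12 hc Δ1, Gval M1 M2 hM1 h12 hc Δ2]
    have hbase : (0:ℝ) < 2 * (M1:ℝ) + (M2:ℝ) - 1 := by linarith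
    have hM2inv : (0:ℝ) < 1 / (2 * (M1 : ℝ) + (M2 : ℝ) - 1) ^ 2 := by
      apply div_pos one_pos (pow_pos hbase 2)
    apply mul_lt_mul_of_pos_left ?_ hM2inv
    have ha1 : 0 < aF M1 M2 Δ1 := aF_pos hM1 h12 Δ1 h1pos (lt_of_lt_of_le hlt h2le)
    have ha2 : 0 ≤ aF M1 M2 Δ2 := aF_nonneg hM1 h12 Δ2 h2pos h2le
    have haa : aF M1 M2 Δ2 < aF M1 M2 Δ1 := aF_anti hM1 h12 Δ1 Δ2 h1pos hlt h2le
    have hb1 : 0 < bF M1 M2 Δ1 := bF_pos hM1 h12 Δ1 h1pos (le_of_lt (lt_of_lt_of_le hlt h2le))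
    have hb2 : 0 < bF M1 M2 Δ2 := bF_pos hM1 h12 Δ2 h2pos h2le
    have hbb : bF M1 M2 Δ2 < bF M1 M2 Δ1 := bF_anti hM1 h12 Δ1 Δ2 h1pos hlt h2le
    have hc1 : 0 < Real.cos (((M1:ℝ) - 1) * ((M2:ℝ) * Real.pi * Δ1 / 2)) :=
      cG_pos hM1 h12 Δ1 h1pos (le_of_lt (lt_of_lt_of_le hlt h2le))
    have hc2 : 0 < Real.cos (((M1:ℝ) - 1) * ((M2:ℝ) * Real.pi * Δ2 / 2)) :=
      cG_pos hM1 h12 Δ2 h2pos h2le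
    have hcc : Real.cos (((M1:ℝ) - 1) * ((M2:ℝ) * Real.pi * Δ2 / 2))
        < Real.cos (((M1:ℝ) - 1) * ((M2:ℝ) * Real.pi * Δ1 / 2)) :=
      cG_anti hM1 h12 Δ1 Δ2 h1pos hlt h2le
    have k1 : bF M1 M2 Δ2 * Real.cos (((M1:ℝ) - 1) * ((M2:ℝ) * Real.pi * Δ2 / 2))
        < bF M1 M2 Δ1 * Real.cos (((M1:ℝ) - 1) * ((M2:ℝ) * Real.pi * Δ1 / 2)) := by
      nlinarith
    have k2 := mul_le_mul_of_nonneg_left k1.le ha2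
    have k3 := mul_lt_mul_of_pos_right haa (mul_pos hb1 hc1)
    have k4 : aF M1 M2 Δ2 ^ 2 < aF M1 M2 Δ1 ^ 2 := by nlinarith
    have k5 : bF M1 M2 Δ2 ^ 2 < bF M1 M2 Δ1 ^ 2 := by nlinarith
    nlinarith [k2, k3, k4, k5]
  refine ⟨hanti, ?_⟩
  intro Δ hΔ hmin
  by_contra hcon
  push_neg at hcon
  have hmem : Set.Ioo Δ (1 / ((M1 : ℝ) * (M2 : ℝ))) ∈ nhdsWithin Δ (Set.Ioi Δ) :=
    Ioo_mem_nhdsGT_of_mem ⟨le_refl Δ, hcon⟩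
  have hev1 : ∀ᶠ y in nhdsWithin Δ (Set.Ioi Δ), Gcp M1 M2 Δ ≤ Gcp M1 M2 y :=
    hmin.filter_mono nhdsWithin_le_nhds
  have hev2 : ∀ᶠ y in nhdsWithin Δ (Set.Ioi Δ), y ∈ Set.Ioo Δ (1 / ((M1 : ℝ) * (M2 : ℝ))) :=
    Filter.eventually_of_mem hmem (fun y hy => hy)
  obtain ⟨y, hy1, hy2⟩ := (hev1.and hev2).exists
  have hGy : Gcp M1 M2 y < Gcp M1 M2 Δ :=
    hanti ⟨hΔ, le_of_lt hcon⟩ ⟨lt_trans hΔ hy2.1, le_of_lt hy2.2⟩ hy2.1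
  linarith
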